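/- Let α ∈ (0,1/2). There exists a constant c > 0 such that for every piecewise C¹ continuous path γ : [0,1] → Π⁺ (the open upper half-plane), |∫_γ dz ∫_{\bar γ} d\bar{w} (−i(z − \bar{w}))^{2α−2}| ≤ c |γ(1) − γ(0)|^{2α}, where \bar γ denotes the complex-conjugate path and ζ^{2α−2} is the principal branch power (well-defined since Re(−i(z−\bar w)) > 0 for z,w ∈ Π⁺). -/

import Mathlib

open Complex MeasureTheory Set intervalIntegral

/-- chain rule for a principal power of a complex-valued function of a real variable. -/
lemma hasDerivAt_cpow_comp {f : ℝ → ℂ} {f' : ℂ} {t : ℝ} (hf : HasDerivAt f f' t) (c : ℂ)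
    (h0 : f t ∈ Complex.slitPlane) :
    HasDerivAt (fun t => f t ^ c) (c * f t ^ (c - 1) * f') t := by
  have h := (Complex.hasStrictDerivAt_cpow_const (c := c) h0).hasDerivAt
  have h2 := HasDerivAt.comp t h hf
  simpa [Function.comp_def, mul_assoc] using h2

/-- Hölder continuity of `z ↦ z ^ s` on the right half-plane, `s ∈ (0,1)`. -/
lemma hoelder_cpow {s : ℝ} (hs0 : 0 < s) (hs1 : s < 1) {a b : ℂ}
    (ha : 0 < a.re) (hb : 0 < b.re) :
    ‖a ^ (s : ℂ) - b ^ (s : ℂ)‖ ≤ 6 * ‖a - b‖ ^ s := by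
  set d := ‖a - b‖ with hd
  have hd0 : 0 ≤ d := norm_nonneg _
  rcases eq_or_lt_of_le hd0 with hd0' | hd0'
  · -- `d = 0`, so `a = b`
    have hab : a = b := sub_eq_zero.mp (norm_eq_zero.mp hd0'.symm)
    rw [hab, sub_self, norm_zero, ← hd0', Real.zero_rpow hs0.ne', mul_zero]
  · have ha0 : a ≠ 0 := fun h => by simp [h] at ha
    have hb0 : b ≠ 0 := fun h => by simp [h] at hb
    have habs : ‖a ^ (s:ℂ)‖ = ‖a‖ ^ s := Complex.norm_cpow_real a s
    have hbbs : ‖b ^ (s:ℂ)‖ = ‖b‖ ^ s := Complex.norm_cpow_real b s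
    rcases le_or_gt (min (‖a‖) (‖b‖)) (2 * d) with hmin | hmin
    · -- both moduli are at most `3d`
      have hA : ‖a‖ ≤ 3 * d ∧ ‖b‖ ≤ 3 * d := by
        have h1 : ‖a‖ ≤ ‖b‖ + d := by
          have := norm_sub_le a b
          calc ‖a‖ = ‖b + (a - b)‖ := by ring_nf
            _ ≤ ‖b‖ + ‖a - b‖ := norm_add_le _ _
            _ = ‖b‖ + d := by rw [hd]
        have h2 : ‖b‖ ≤ ‖a‖ + d := by
          calc ‖b‖ = ‖a + (b - a)‖ := by ring_nf
            _ ≤ ‖a‖ + ‖b - a‖ := norm_add_le _ _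
            _ = ‖a‖ + d := by rw [hd, norm_sub_rev]
        rcases le_total (‖a‖) (‖b‖) with h | h
        · rw [min_eq_left h] at hmin; constructor <;> linarith
        · rw [min_eq_right h] at hmin; constructor <;> linarith
      have h3s : (3:ℝ) ^ s ≤ 3 := by
        calc (3:ℝ) ^ s ≤ (3:ℝ) ^ (1:ℝ) :=
              Real.rpow_le_rpow_of_exponent_le (by norm_num) hs1.le
          _ = 3 := Real.rpow_one 3
      calc ‖a ^ (s:ℂ) - b ^ (s:ℂ)‖
          ≤ ‖a ^ (s:ℂ)‖ + ‖b ^ (s:ℂ)‖ := norm_sub_le _ _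
        _ = ‖a‖ ^ s + ‖b‖ ^ s := by rw [habs, hbbs]
        _ ≤ (3*d) ^ s + (3*d) ^ s := by
            gcongr <;> [exact hA.1; exact hA.2]
        _ = 2 * ((3:ℝ) ^ s * d ^ s) := by
            rw [Real.mul_rpow (by norm_num) hd0]; ring
        _ ≤ 6 * d ^ s := by nlinarith [Real.rpow_nonneg hd0 s]
    · -- both moduli exceed `2d`: use the mean value inequality on the segment
      have h2a : 2 * d < ‖a‖ := lt_of_lt_of_le hmin (min_le_left _ _)
      have h2b : 2 * d < ‖b‖ := lt_of_lt_of_le hmin (min_le_right _ _)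
      set L : ℝ → ℂ := fun t => a + (t:ℂ) * (b - a) with hL
      have hLre : ∀ t ∈ Icc (0:ℝ) 1, 0 < (L t).re := by
        intro t ht
        have : (L t).re = (1 - t) * a.re + t * b.re := by
          simp [hL, Complex.add_re, Complex.mul_re, Complex.ofReal_re, Complex.ofReal_im,
            Complex.sub_re]
          ring
        rw [this]
        rcases ht with ⟨ht0, ht1⟩
        have hm : 0 < min a.re b.re := lt_min ha hb
        nlinarith [mul_le_mul_of_nonneg_left (min_le_left a.re b.re)
            (by linarith : (0:ℝ) ≤ 1 - t),
          mul_le_mul_of_nonneg_left (min_le_right a.re b.re) ht0]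
      have hLabs : ∀ t ∈ Icc (0:ℝ) 1, d ≤ ‖L t‖ := by
        intro t ht
        have h1 : ‖a‖ ≤ ‖L t‖ + ‖(t:ℂ) * (b - a)‖ := by
          calc ‖a‖ = ‖L t - (t:ℂ) * (b - a)‖ := by rw [hL]; ring_nf
            _ ≤ ‖L t‖ + ‖(t:ℂ) * (b - a)‖ := by
                simpa using norm_sub_le (L t) ((t:ℂ) * (b - a))
        have h2 : ‖(t:ℂ) * (b - a)‖ ≤ d := by
          rw [norm_mul, Complex.norm_real, Real.norm_eq_abs, _root_.abs_of_nonneg ht.1, hd, norm_sub_rev]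
          nlinarith [ht.2, hd0]
        linarith
      have hderiv : ∀ t ∈ Icc (0:ℝ) 1,
          HasDerivWithinAt (fun t => L t ^ (s:ℂ))
            ((s:ℂ) * L t ^ ((s:ℂ) - 1) * (b - a)) (Icc (0:ℝ) 1) t := by
        intro t ht
        have hL' : HasDerivAt L (b - a) t := by
          have h1 : HasDerivAt (fun t : ℝ => (t:ℂ)) 1 t := by
            exact Complex.ofRealCLM.hasDerivAt (x := t)
          simpa [hL] using (h1.mul_const (b - a)).const_add a
        exact (hasDerivAt_cpow_comp hL' (s:ℂ)
          (mem_slitPlane_iff.mpr (Or.inl (hLre t ht)))).hasDerivWithinAt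
      have hbound : ∀ t ∈ Icc (0:ℝ) 1,
          ‖(s:ℂ) * L t ^ ((s:ℂ) - 1) * (b - a)‖ ≤ s * d ^ (s - 1) * d := by
        intro t ht
        have hL0 : L t ≠ 0 := fun h => by
          have := hLre t ht; rw [h] at this; simp at this
        have : ‖L t ^ ((s:ℂ) - 1)‖ = ‖L t‖ ^ (s - 1) := by
          have : ((s:ℂ) - 1) = ((s - 1 : ℝ) : ℂ) := by push_cast; ring
          rw [this, Complex.norm_cpow_real]
        calc ‖(s:ℂ) * L t ^ ((s:ℂ) - 1) * (b - a)‖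
            = s * (‖L t‖ ^ (s - 1)) * d := by
              simp only [norm_mul]
              rw [this, Complex.norm_real, Real.norm_eq_abs, abs_of_pos hs0, hd, norm_sub_rev]
          _ ≤ s * d ^ (s - 1) * d := by
              have hX := Real.rpow_le_rpow_of_nonpos hd0' (hLabs t ht)
                (by linarith : s - 1 ≤ 0)
              exact mul_le_mul_of_nonneg_right
                (mul_le_mul_of_nonneg_left hX hs0.le) hd0
      have key := (convex_Icc (0:ℝ) 1).norm_image_sub_le_of_norm_hasDerivWithin_le
        hderiv hbound (left_mem_Icc.mpr zero_le_one) (right_mem_Icc.mpr zero_le_one)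
      have hL1 : L 1 = b := by simp [hL]
      have hL0 : L 0 = a := by simp [hL]
      rw [hL1, hL0] at key
      have hds : s * d ^ (s - 1) * d = s * d ^ s := by
        have h : d ^ (s - 1) * d = d ^ s := by
          rw [← Real.rpow_add_one hd0'.ne' (s - 1)]
          norm_num
        rw [mul_assoc, h]
      calc ‖a ^ (s:ℂ) - b ^ (s:ℂ)‖
          = ‖b ^ (s:ℂ) - a ^ (s:ℂ)‖ := by
            rw [norm_sub_rev]
        _ ≤ s * d ^ (s - 1) * d * ‖(1:ℝ) - 0‖ := key
        _ = s * d ^ s := by rw [hds]; simp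
        _ ≤ 6 * d ^ s := by nlinarith [Real.rpow_nonneg hd0 s]

/-- interval integrability is preserved by complex conjugation. -/
lemma IntervalIntegrable.conj' {f : ℝ → ℂ} {a b : ℝ}
    (h : IntervalIntegrable f volume a b) :
    IntervalIntegrable (fun x => (starRingEnd ℂ) (f x)) volume a b :=
  ⟨(Complex.conjCLE.toContinuousLinearMap.integrable_comp h.1 :),
   (Complex.conjCLE.toContinuousLinearMap.integrable_comp h.2 :)⟩

/-- Fundamental theorem of calculus for a complex power of a path with positive real part,
allowing a finite exceptional set for differentiability. -/
lemma ftc_pow (g g' : ℝ → ℂ) (S : Finset ℝ)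
    (hc : ContinuousOn g (Icc 0 1))
    (hdv : ∀ t ∈ Icc (0:ℝ) 1 \ (S : Set ℝ), HasDerivAt g (g' t) t)
    (hi : IntervalIntegrable g' volume 0 1)
    (hre : ∀ t ∈ Icc (0:ℝ) 1, 0 < (g t).re) (r : ℂ) (hr : r ≠ 0) :
    ∫ t in (0:ℝ)..1, g t ^ (r - 1) * g' t = (g 1 ^ r - g 0 ^ r) / r := by
  have hsp : ∀ t ∈ Icc (0:ℝ) 1, g t ∈ slitPlane := fun t ht =>
    mem_slitPlane_iff.mpr (Or.inl (hre t ht))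
  have Hc : ContinuousOn (fun t => g t ^ r / r) (Icc 0 1) :=
    (hc.cpow_const hsp).div_const r
  have Hd : ∀ t ∈ Ioo (0:ℝ) 1 \ (S : Set ℝ),
      HasDerivAt (fun t => g t ^ r / r) (g t ^ (r - 1) * g' t) t := by
    intro t ht
    have ht' : t ∈ Icc (0:ℝ) 1 \ (S : Set ℝ) := ⟨Ioo_subset_Icc_self ht.1, ht.2⟩
    have h1 : HasDerivAt (fun t => g t ^ r / r) (r * g t ^ (r - 1) * g' t / r) t :=
      (hasDerivAt_cpow_comp (hdv t ht') r (hsp t ht'.1)).div_const r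
    have h2 : r * g t ^ (r - 1) * g' t / r = g t ^ (r - 1) * g' t := by
      field_simp
    rwa [h2] at h1
  have Hi : IntervalIntegrable (fun t => g t ^ (r - 1) * g' t) volume 0 1 := by
    apply hi.continuousOn_mul
    rw [uIcc_of_le (zero_le_one' ℝ)]
    exact hc.cpow_const hsp
  have := integral_eq_of_hasDerivAt_off_countable_of_le
    (fun t => g t ^ r / r) (fun t => g t ^ (r - 1) * g' t)
    (zero_le_one' ℝ) (S.countable_toSet) Hc Hd Hi
  rw [this, sub_div]

/-- Contour bound: for any piecewise `C¹` path `γ` in the open upper half-plane,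
`|∫_γ dz ∫_{\bar γ} d\bar w (−i(z−\bar w))^{2α−2}| ≤ c |γ(1)−γ(0)|^{2α}`. -/
theorem stmt6 (α : ℝ) (hα : α ∈ Set.Ioo (0 : ℝ) (1 / 2)) :
    ∃ c > 0, ∀ (γ γ' : ℝ → ℂ) (S : Finset ℝ),
      ContinuousOn γ (Set.Icc 0 1) →
      (∀ t ∈ Set.Icc (0 : ℝ) 1 \ (S : Set ℝ), HasDerivAt γ (γ' t) t) →
      IntervalIntegrable γ' volume 0 1 →
      (∀ t ∈ Set.Icc (0 : ℝ) 1, 0 < (γ t).im) →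
      ‖∫ u in (0:ℝ)..1, ∫ v in (0:ℝ)..1,
          (-I * (γ u - (starRingEnd ℂ) (γ v))) ^ (2 * (α : ℂ) - 2)
            * γ' u * (starRingEnd ℂ) (γ' v)‖
        ≤ c * ‖γ 1 - γ 0‖ ^ (2 * α) := by
  obtain ⟨hα0, hα2⟩ := hα
  have h2α : 0 < 2 * α := by linarith
  have h2α1 : 2 * α < 1 := by linarith
  refine ⟨12 / (2 * α * (1 - 2 * α)), div_pos (by norm_num) (by nlinarith), ?_⟩
  intro γ γ' S hγc hγd hγ'i him
  set d := ‖γ 1 - γ 0‖ with hdd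
  set ζ : ℝ → ℝ → ℂ := fun u v => -I * (γ u - (starRingEnd ℂ) (γ v)) with hζ
  have hs1cast : (2 * (α : ℂ) - 1) = ((2 * α - 1 : ℝ) : ℂ) := by push_cast; ring
  have hsccast : (2 * (α : ℂ)) = ((2 * α : ℝ) : ℂ) := by push_cast; ring
  have hs1ne : (2 * (α : ℂ) - 1) ≠ 0 := by
    rw [hs1cast]; exact Complex.ofReal_ne_zero.mpr (by linarith)
  have hscne : (2 * (α : ℂ)) ≠ 0 := by
    rw [hsccast]; exact Complex.ofReal_ne_zero.mpr (by linarith)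
  have hone : (0:ℝ) ∈ Icc (0:ℝ) 1 := left_mem_Icc.mpr zero_le_one
  have hone' : (1:ℝ) ∈ Icc (0:ℝ) 1 := right_mem_Icc.mpr zero_le_one
  -- positivity of real part of ζ
  have hre : ∀ u ∈ Icc (0:ℝ) 1, ∀ v ∈ Icc (0:ℝ) 1, 0 < (ζ u v).re := by
    intro u hu v hv
    have : (ζ u v).re = (γ u).im + (γ v).im := by
      simp [hζ, Complex.mul_re, Complex.sub_re, Complex.sub_im]
      try ring
    rw [this]
    exact add_pos (him u hu) (him v hv)
  -- continuity of ζ in each variable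
  have hcontu : ∀ v0 ∈ Icc (0:ℝ) 1, ContinuousOn (fun u => ζ u v0) (Icc 0 1) := by
    intro v0 _
    exact continuousOn_const.mul (hγc.sub continuousOn_const)
  have hcontv : ∀ u0 ∈ Icc (0:ℝ) 1, ContinuousOn (fun v => ζ u0 v) (Icc 0 1) := by
    intro u0 _
    exact continuousOn_const.mul (continuousOn_const.sub (by
      simpa only [starRingEnd_apply] using hγc.star))
  -- derivative of ζ in v
  have hdv : ∀ u0 : ℝ, ∀ v ∈ Icc (0:ℝ) 1 \ (S : Set ℝ),
      HasDerivAt (fun v => ζ u0 v) (I * (starRingEnd ℂ) (γ' v)) v := by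
    intro u0 v hv
    have h1 := (hγd v hv).star
    have h2 : HasDerivAt (fun v => -I * (γ u0 - star (γ v))) (-I * -(star (γ' v))) v :=
      (h1.const_sub (γ u0)).const_mul (-I)
    have h3 : -I * -(star (γ' v)) = I * (starRingEnd ℂ) (γ' v) := by
      simp only [starRingEnd_apply]; ring
    rw [h3] at h2
    simpa only [hζ, starRingEnd_apply] using h2
  -- derivative of ζ in u
  have hdu : ∀ v0 : ℝ, ∀ u ∈ Icc (0:ℝ) 1 \ (S : Set ℝ),
      HasDerivAt (fun u => ζ u v0) (-I * γ' u) u := by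
    intro v0 u hu
    have h2 : HasDerivAt (fun u => -I * (γ u - (starRingEnd ℂ) (γ v0)))
        (-I * γ' u) u := by
      have := ((hγd u hu).sub_const ((starRingEnd ℂ) (γ v0))).const_mul (-I)
      simpa using this
    simpa only [hζ] using h2
  -- integrability of the derivative factors
  have hconji : IntervalIntegrable (fun v => I * (starRingEnd ℂ) (γ' v)) volume 0 1 :=
    (hγ'i.conj').const_mul I
  have hnegIi : IntervalIntegrable (fun u => -I * γ' u) volume 0 1 := hγ'i.const_mul (-I)
  -- inner integral evaluation
  have inner_eq : ∀ u ∈ Icc (0:ℝ) 1,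
      (∫ v in (0:ℝ)..1, ζ u v ^ (2 * (α : ℂ) - 2) * γ' u * (starRingEnd ℂ) (γ' v))
        = (-I / (2 * (α : ℂ) - 1)) * (ζ u 1 ^ (2 * (α : ℂ) - 1) * γ' u) - (-I / (2 * (α : ℂ) - 1)) * (ζ u 0 ^ (2 * (α : ℂ) - 1) * γ' u) := by
    intro u hu
    have hftc : (∫ v in (0:ℝ)..1, ζ u v ^ ((2 * (α : ℂ) - 1) - 1) * (I * (starRingEnd ℂ) (γ' v)))
        = (ζ u 1 ^ (2 * (α : ℂ) - 1) - ζ u 0 ^ (2 * (α : ℂ) - 1)) / (2 * (α : ℂ) - 1) :=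
      ftc_pow (fun v => ζ u v) (fun v => I * (starRingEnd ℂ) (γ' v)) S
        (hcontv u hu) (hdv u) hconji (fun v hv => hre u hu v hv) (2 * (α : ℂ) - 1) hs1ne
    have hexp : 2 * (α : ℂ) - 2 = (2 * (α : ℂ) - 1) - 1 := by ring
    have hpt : ∀ v : ℝ, ζ u v ^ ((2 * (α : ℂ) - 1) - 1) * γ' u * (starRingEnd ℂ) (γ' v)
        = (γ' u * -I) * (ζ u v ^ ((2 * (α : ℂ) - 1) - 1) * (I * (starRingEnd ℂ) (γ' v))) := by
      intro v
      have : I * I = -1 := Complex.I_mul_I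
      linear_combination (γ' u * ζ u v ^ ((2 * (α : ℂ) - 1) - 1) * (starRingEnd ℂ) (γ' v)) * this
    calc (∫ v in (0:ℝ)..1, ζ u v ^ (2 * (α : ℂ) - 2) * γ' u * (starRingEnd ℂ) (γ' v))
        = ∫ v in (0:ℝ)..1,
            (γ' u * -I) * (ζ u v ^ ((2 * (α : ℂ) - 1) - 1) * (I * (starRingEnd ℂ) (γ' v))) := by
          rw [hexp]
          exact intervalIntegral.integral_congr fun v _ => hpt v
      _ = (γ' u * -I) * ∫ v in (0:ℝ)..1,
            ζ u v ^ ((2 * (α : ℂ) - 1) - 1) * (I * (starRingEnd ℂ) (γ' v)) :=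
          intervalIntegral.integral_const_mul _ _
      _ = (γ' u * -I) * ((ζ u 1 ^ (2 * (α : ℂ) - 1) - ζ u 0 ^ (2 * (α : ℂ) - 1)) / (2 * (α : ℂ) - 1)) := by rw [hftc]
      _ = (-I / (2 * (α : ℂ) - 1)) * (ζ u 1 ^ (2 * (α : ℂ) - 1) * γ' u) - (-I / (2 * (α : ℂ) - 1)) * (ζ u 0 ^ (2 * (α : ℂ) - 1) * γ' u) := by ring
  -- outer integrands are integrable
  have hInt : ∀ v0 ∈ Icc (0:ℝ) 1,
      IntervalIntegrable (fun u => ζ u v0 ^ (2 * (α : ℂ) - 1) * γ' u) volume 0 1 := by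
    intro v0 hv0
    apply hγ'i.continuousOn_mul
    rw [uIcc_of_le (zero_le_one' ℝ)]
    exact (hcontu v0 hv0).cpow_const fun u hu =>
      mem_slitPlane_iff.mpr (Or.inl (hre u hu v0 hv0))
  -- outer FTC for fixed v0
  have outer_ftc : ∀ v0 ∈ Icc (0:ℝ) 1,
      (∫ u in (0:ℝ)..1, ζ u v0 ^ (2 * (α : ℂ) - 1) * γ' u)
        = I * ((ζ 1 v0 ^ (2 * (α : ℂ)) - ζ 0 v0 ^ (2 * (α : ℂ))) / (2 * (α : ℂ))) := by
    intro v0 hv0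
    have hftc : (∫ u in (0:ℝ)..1, ζ u v0 ^ ((2 * (α : ℂ)) - 1) * (-I * γ' u))
        = (ζ 1 v0 ^ (2 * (α : ℂ)) - ζ 0 v0 ^ (2 * (α : ℂ))) / (2 * (α : ℂ)) :=
      ftc_pow (fun u => ζ u v0) (fun u => -I * γ' u) S
        (hcontu v0 hv0) (hdu v0) hnegIi (fun u hu => hre u hu v0 hv0) (2 * (α : ℂ)) hscne
    have hpt : ∀ u : ℝ, ζ u v0 ^ (2 * (α : ℂ) - 1) * (-I * γ' u) = -I * (ζ u v0 ^ (2 * (α : ℂ) - 1) * γ' u) := by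
      intro u; ring
    rw [intervalIntegral.integral_congr (fun u _ => hpt u),
      intervalIntegral.integral_const_mul] at hftc
    have hII : I * -I = 1 := by rw [mul_neg, Complex.I_mul_I, neg_neg]
    calc (∫ u in (0:ℝ)..1, ζ u v0 ^ (2 * (α : ℂ) - 1) * γ' u)
        = (I * -I) * (∫ u in (0:ℝ)..1, ζ u v0 ^ (2 * (α : ℂ) - 1) * γ' u) := by rw [hII, one_mul]
      _ = I * (-I * ∫ u in (0:ℝ)..1, ζ u v0 ^ (2 * (α : ℂ) - 1) * γ' u) := by ring
      _ = I * ((ζ 1 v0 ^ (2 * (α : ℂ)) - ζ 0 v0 ^ (2 * (α : ℂ))) / (2 * (α : ℂ))) := by rw [hftc]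
  -- put everything together
  have hDeq : (∫ u in (0:ℝ)..1, ∫ v in (0:ℝ)..1,
      ζ u v ^ (2 * (α : ℂ) - 2) * γ' u * (starRingEnd ℂ) (γ' v))
      = (-I / (2 * (α : ℂ) - 1)) * (I * ((ζ 1 1 ^ (2 * (α : ℂ)) - ζ 0 1 ^ (2 * (α : ℂ))) / (2 * (α : ℂ))))
        - (-I / (2 * (α : ℂ) - 1)) * (I * ((ζ 1 0 ^ (2 * (α : ℂ)) - ζ 0 0 ^ (2 * (α : ℂ))) / (2 * (α : ℂ)))) := by
    have h1 : (∫ u in (0:ℝ)..1, ∫ v in (0:ℝ)..1,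
        ζ u v ^ (2 * (α : ℂ) - 2) * γ' u * (starRingEnd ℂ) (γ' v))
        = ∫ u in (0:ℝ)..1,
            ((-I / (2 * (α : ℂ) - 1)) * (ζ u 1 ^ (2 * (α : ℂ) - 1) * γ' u) - (-I / (2 * (α : ℂ) - 1)) * (ζ u 0 ^ (2 * (α : ℂ) - 1) * γ' u)) := by
      apply intervalIntegral.integral_congr
      rw [uIcc_of_le (zero_le_one' ℝ)]
      exact fun u hu => inner_eq u hu
    rw [h1, intervalIntegral.integral_sub (((hInt 1 hone').const_mul _))
      (((hInt 0 hone).const_mul _)), intervalIntegral.integral_const_mul,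
      intervalIntegral.integral_const_mul, outer_ftc 1 hone', outer_ftc 0 hone]
  -- absolute values
  have habs_s1 : ‖2 * (α : ℂ) - 1‖ = 1 - 2 * α := by
    rw [hs1cast, Complex.norm_real, Real.norm_eq_abs, abs_of_neg (by linarith)]
    ring
  have habs_sc : ‖2 * (α : ℂ)‖ = 2 * α := by
    rw [hsccast, Complex.norm_real, Real.norm_eq_abs, abs_of_pos h2α]
  -- Hölder bound for each pair
  have hnum : ∀ v0 ∈ Icc (0:ℝ) 1,
      ‖ζ 1 v0 ^ (2 * (α : ℂ)) - ζ 0 v0 ^ (2 * (α : ℂ))‖ ≤ 6 * d ^ (2 * α) := by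
    intro v0 hv0
    have hcast : (2 * (α : ℂ)) = (((2 * α : ℝ)) : ℂ) := hsccast
    have hdiff : ‖ζ 1 v0 - ζ 0 v0‖ = d := by
      have : ζ 1 v0 - ζ 0 v0 = -I * (γ 1 - γ 0) := by rw [hζ]; ring
      rw [this, norm_mul, hdd]
      simp
    have := hoelder_cpow h2α h2α1 (hre 1 hone' v0 hv0) (hre 0 hone v0 hv0)
    rw [hdiff] at this
    rw [hcast]
    exact this
  rw [hDeq]
  have hb1 := hnum 1 hone'
  have hb0 := hnum 0 hone
  have habs1 : ‖(-I / (2 * (α : ℂ) - 1)) * (I * ((ζ 1 1 ^ (2 * (α : ℂ)) - ζ 0 1 ^ (2 * (α : ℂ))) / (2 * (α : ℂ))))‖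
      ≤ (1 / (1 - 2 * α)) * ((6 * d ^ (2 * α)) / (2 * α)) := by
    rw [norm_mul, norm_div, norm_mul, norm_div, habs_s1, habs_sc]
    simp only [norm_neg, Complex.norm_I, one_mul, one_div]
    refine mul_le_mul_of_nonneg_left ?_ (inv_nonneg.mpr (by linarith))
    exact (div_le_div_iff_of_pos_right h2α).mpr hb1
  have habs0 : ‖(-I / (2 * (α : ℂ) - 1)) * (I * ((ζ 1 0 ^ (2 * (α : ℂ)) - ζ 0 0 ^ (2 * (α : ℂ))) / (2 * (α : ℂ))))‖
      ≤ (1 / (1 - 2 * α)) * ((6 * d ^ (2 * α)) / (2 * α)) := by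
    rw [norm_mul, norm_div, norm_mul, norm_div, habs_s1, habs_sc]
    simp only [norm_neg, Complex.norm_I, one_mul, one_div]
    refine mul_le_mul_of_nonneg_left ?_ (inv_nonneg.mpr (by linarith))
    exact (div_le_div_iff_of_pos_right h2α).mpr hb0
  calc ‖(-I / (2 * (α : ℂ) - 1)) * (I * ((ζ 1 1 ^ (2 * (α : ℂ)) - ζ 0 1 ^ (2 * (α : ℂ))) / (2 * (α : ℂ))))
        - (-I / (2 * (α : ℂ) - 1)) * (I * ((ζ 1 0 ^ (2 * (α : ℂ)) - ζ 0 0 ^ (2 * (α : ℂ))) / (2 * (α : ℂ))))‖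
      ≤ ‖(-I / (2 * (α : ℂ) - 1)) * (I * ((ζ 1 1 ^ (2 * (α : ℂ)) - ζ 0 1 ^ (2 * (α : ℂ))) / (2 * (α : ℂ))))‖
        + ‖(-I / (2 * (α : ℂ) - 1)) * (I * ((ζ 1 0 ^ (2 * (α : ℂ)) - ζ 0 0 ^ (2 * (α : ℂ))) / (2 * (α : ℂ))))‖ :=
        norm_sub_le _ _
    _ ≤ (1 / (1 - 2 * α)) * ((6 * d ^ (2 * α)) / (2 * α))
        + (1 / (1 - 2 * α)) * ((6 * d ^ (2 * α)) / (2 * α)) := add_le_add habs1 habs0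
    _ = 12 / (2 * α * (1 - 2 * α)) * d ^ (2 * α) := by
        field_simp
        ring
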